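/- arXiv:1902.08380 — 6 statements merged into one kernel-verified Lean document; each statement's English description precedes it below -/
import Mathlib

section
/- Let D, D' be real d×d matrices with unit-norm columns, D invertible, and suppose ⟨D_j, D'_j⟩ ≥ 0 for every column index j. With Λ(D,D') the diagonal matrix having entries -½‖D_j - D'_j‖₂², the matrix A = D⁻¹D' - I - Λ(D,D') satisfies ‖D - D'‖_F / (√2 · ‖D‖₂) ≤ ‖A‖_F ≤ ‖D⁻¹‖₂ · ‖D - D'‖_F, where ‖·‖₂ is the spectral norm. -/
open Matrix Finset

/-- Frobenius norm of a real matrix. -/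
noncomputable def frob {d : ℕ} (X : Matrix (Fin d) (Fin d) ℝ) : ℝ :=
  Real.sqrt (∑ i, ∑ j, (X i j) ^ 2)

/-- Spectral (ℓ₂ operator) norm of a real matrix. -/
noncomputable def specNorm {d : ℕ} (X : Matrix (Fin d) (Fin d) ℝ) : ℝ :=
  ‖Matrix.toEuclideanCLM (𝕜 := ℝ) X‖

lemma frob_nonneg {d : ℕ} (X : Matrix (Fin d) (Fin d) ℝ) : 0 ≤ frob X :=
  Real.sqrt_nonneg _

lemma frob_sq {d : ℕ} (X : Matrix (Fin d) (Fin d) ℝ) :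
    frob X ^ 2 = ∑ i, ∑ j, (X i j) ^ 2 := by
  apply Real.sq_sqrt
  positivity

lemma frob_mul_le {d : ℕ} (X M : Matrix (Fin d) (Fin d) ℝ) :
    frob (X * M) ≤ specNorm X * frob M := by
  have key : ∀ j, ∑ i, ((X * M) i j) ^ 2 ≤ specNorm X ^ 2 * ∑ i, (M i j) ^ 2 := by
    intro j
    set v : EuclideanSpace ℝ (Fin d) := (WithLp.equiv 2 _).symm (fun i => M i j) with hv
    have h1 : (Matrix.toEuclideanCLM (𝕜 := ℝ) X) v
        = (WithLp.equiv 2 _).symm (X.mulVec (fun i => M i j)) := by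
      rw [hv, Matrix.toEuclideanCLM_toLp]; simp [Matrix.toLin'_apply]
    have h2 : ‖(Matrix.toEuclideanCLM (𝕜 := ℝ) X) v‖ ≤ specNorm X * ‖v‖ :=
      (Matrix.toEuclideanCLM (𝕜 := ℝ) X).le_opNorm v
    have hnv : ‖v‖ ^ 2 = ∑ i, (M i j) ^ 2 := by
      rw [EuclideanSpace.norm_eq, Real.sq_sqrt (by positivity)]
      simp [hv, sq_abs]
    have hnXv : ‖(Matrix.toEuclideanCLM (𝕜 := ℝ) X) v‖ ^ 2 = ∑ i, ((X * M) i j) ^ 2 := by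
      rw [h1, EuclideanSpace.norm_eq, Real.sq_sqrt (by positivity)]
      congr 1; ext i
      simp [Matrix.mulVec, Matrix.mul_apply, dotProduct, sq_abs]
    calc ∑ i, ((X * M) i j) ^ 2 = ‖(Matrix.toEuclideanCLM (𝕜 := ℝ) X) v‖ ^ 2 := hnXv.symm
      _ ≤ (specNorm X * ‖v‖) ^ 2 := by
          apply sq_le_sq' _ h2
          nlinarith [norm_nonneg ((Matrix.toEuclideanCLM (𝕜 := ℝ) X) v)]
      _ = specNorm X ^ 2 * ∑ i, (M i j) ^ 2 := by rw [mul_pow, hnv]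
  have hsq : frob (X * M) ^ 2 ≤ (specNorm X * frob M) ^ 2 := by
    rw [frob_sq, mul_pow, frob_sq, Finset.sum_comm (s := univ) (t := univ),
      Finset.sum_comm (s := univ) (t := univ) (f := fun i j => (M i j) ^2), Finset.mul_sum]
    exact Finset.sum_le_sum fun j _ => key j
  have h0 : (0:ℝ) ≤ specNorm X * frob M := mul_nonneg (norm_nonneg _) (frob_nonneg _)
  nlinarith [frob_nonneg (X * M)]

theorem stmt3 (d : ℕ) (D D' : Matrix (Fin d) (Fin d) ℝ)
    (hD : ∀ j, ∑ i, (D i j) ^ 2 = 1) (hD' : ∀ j, ∑ i, (D' i j) ^ 2 = 1)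
    (hDinv : IsUnit D)
    (hpos : ∀ j, 0 ≤ ∑ i, D i j * D' i j)
    (Λ : Matrix (Fin d) (Fin d) ℝ)
    (hΛ : Λ = Matrix.diagonal (fun j => -(1 / 2) * ∑ i, (D i j - D' i j) ^ 2))
    (A : Matrix (Fin d) (Fin d) ℝ)
    (hA : A = D⁻¹ * D' - 1 - Λ) :
    frob (D - D') / (Real.sqrt 2 * specNorm D) ≤ frob A ∧
    frob A ≤ specNorm D⁻¹ * frob (D - D') := by
  set c : Fin d → ℝ := fun j => ∑ i, D i j * D' i j with hc
  have hc1 : ∀ j, c j ≤ 1 := by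
    intro j
    have hcs : (c j) ^ 2 ≤ (∑ i, (D i j)^2) * (∑ i, (D' i j)^2) := by
      have := Finset.sum_mul_sq_le_sq_mul_sq Finset.univ (fun i => D i j) (fun i => D' i j)
      simpa [hc] using this
    rw [hD j, hD' j] at hcs
    nlinarith [hpos j]
  have hcol : ∀ j, ∑ i, (D i j - D' i j) ^ 2 = 2 - 2 * c j := by
    intro j
    calc ∑ i, (D i j - D' i j)^2
        = ∑ i, ((D i j)^2 + (D' i j)^2 - 2*(D i j * D' i j)) := by
          apply Finset.sum_congr rfl; intros; ring
      _ = (∑ i, (D i j)^2) + (∑ i, (D' i j)^2) - 2 * ∑ i, D i j * D' i j := by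
          rw [Finset.sum_sub_distrib, Finset.sum_add_distrib, Finset.mul_sum]
      _ = 2 - 2 * c j := by rw [hD j, hD' j]; simp only [hc]; ring
  have hΛ' : Λ = Matrix.diagonal (fun j => c j - 1) := by
    rw [hΛ]; exact congrArg Matrix.diagonal (funext fun j => by rw [hcol j]; ring)
  set B : Matrix (Fin d) (Fin d) ℝ := D' - D * (1 + Λ) with hBdef
  have hBentry : ∀ i j, B i j = D' i j - c j * D i j := by
    intro i j
    have h1 : (1 : Matrix (Fin d) (Fin d) ℝ) + Λ = Matrix.diagonal c := by
      rw [hΛ', ← Matrix.diagonal_one, Matrix.diagonal_add]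
      congr 1; funext j; ring
    rw [hBdef]
    simp [h1, Matrix.mul_diagonal, mul_comm]
  have hdet : IsUnit D.det := (Matrix.isUnit_iff_isUnit_det D).mp hDinv
  have hAB : A = D⁻¹ * B := by
    rw [hA, hBdef, Matrix.mul_sub, ← Matrix.mul_assoc, Matrix.nonsing_inv_mul D hdet,
      one_mul, sub_add_eq_sub_sub]
  have hDA : D * A = B := by
    rw [hAB, ← Matrix.mul_assoc, Matrix.mul_nonsing_inv D hdet, one_mul]
  have hBsq : frob B ^ 2 = ∑ j, (1 - c j ^ 2) := by
    rw [frob_sq, Finset.sum_comm]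
    apply Finset.sum_congr rfl
    intro j _
    calc ∑ i, (B i j)^2 = ∑ i, ((D' i j)^2 + (c j)^2 * (D i j)^2
          - 2 * c j * (D i j * D' i j)) := by
          apply Finset.sum_congr rfl; intro i _; rw [hBentry i j]; ring
      _ = (∑ i, (D' i j)^2) + (c j)^2 * (∑ i, (D i j)^2)
          - 2 * c j * ∑ i, (D i j * D' i j) := by
          rw [Finset.sum_sub_distrib, Finset.sum_add_distrib, ← Finset.mul_sum, ← Finset.mul_sum]
      _ = 1 - c j ^ 2 := by rw [hD j, hD' j]; simp only [hc]; ring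
  have hDsq : frob (D - D') ^ 2 = ∑ j, (2 - 2 * c j) := by
    rw [frob_sq, Finset.sum_comm]
    apply Finset.sum_congr rfl
    intro j _
    rw [← hcol j]
    apply Finset.sum_congr rfl
    intros; simp [Matrix.sub_apply]
  constructor
  · -- lower bound
    have h1 : frob (D - D') ^ 2 ≤ 2 * frob B ^ 2 := by
      rw [hBsq, hDsq, Finset.mul_sum]
      apply Finset.sum_le_sum
      intro j _
      nlinarith [hc1 j, hpos j]
    have h2 : frob B ≤ specNorm D * frob A := by
      rw [← hDA]; exact frob_mul_le D A
    have hs2 : Real.sqrt 2 ^ 2 = 2 := Real.sq_sqrt (by norm_num)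
    have hsA : (0:ℝ) ≤ specNorm D * frob A :=
      mul_nonneg (norm_nonneg _) (frob_nonneg A)
    have h2sq : frob B ^ 2 ≤ (specNorm D * frob A) ^ 2 :=
      pow_le_pow_left₀ (frob_nonneg B) h2 2
    have hrhs : (0:ℝ) ≤ Real.sqrt 2 * specNorm D * frob A := by
      have := Real.sqrt_nonneg 2; nlinarith
    have hD2 : frob (D - D') ^ 2 ≤ (Real.sqrt 2 * specNorm D * frob A) ^ 2 := by
      calc frob (D - D') ^ 2 ≤ 2 * frob B ^ 2 := h1
        _ ≤ 2 * (specNorm D * frob A) ^ 2 := by linarith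
        _ = (Real.sqrt 2 * specNorm D * frob A) ^ 2 := by
            linear_combination (-(specNorm D ^ 2 * frob A ^ 2)) * hs2
    have h3 : frob (D - D') ≤ Real.sqrt 2 * specNorm D * frob A := by
      nlinarith [frob_nonneg (D - D')]
    rcases eq_or_lt_of_le (mul_nonneg (Real.sqrt_nonneg 2)
      (norm_nonneg (Matrix.toEuclideanCLM (𝕜 := ℝ) D)) :
        (0:ℝ) ≤ Real.sqrt 2 * specNorm D) with h | h
    · rw [← h, div_zero]; exact frob_nonneg A
    · rw [div_le_iff₀ h]
      calc frob (D - D') ≤ Real.sqrt 2 * specNorm D * frob A := h3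
        _ = frob A * (Real.sqrt 2 * specNorm D) := by ring
  · -- upper bound
    have h1 : frob B ≤ frob (D - D') := by
      have hsq : frob B ^ 2 ≤ frob (D - D') ^ 2 := by
        rw [hBsq, hDsq]
        apply Finset.sum_le_sum
        intro j _
        nlinarith [hc1 j]
      nlinarith [frob_nonneg B, frob_nonneg (D - D')]
    calc frob A = frob (D⁻¹ * B) := by rw [hAB]
      _ ≤ specNorm D⁻¹ * frob B := frob_mul_le _ _
      _ ≤ specNorm D⁻¹ * frob (D - D') :=
          mul_le_mul_of_nonneg_left h1 (norm_nonneg _)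
end

section
/- Let D, D' be real d×d matrices with unit-norm columns. Then the squared Frobenius norm of D' - D - D·Λ(D,D') equals Σ_j (1 - ⟨D_j, D'_j⟩²), where Λ(D,D') is the diagonal matrix with j-th entry -½‖D_j - D'_j‖₂². Consequently ‖D' - D - D·Λ(D,D')‖_F ≤ ‖D' - D‖_F. -/
open Matrix Finset

theorem stmt4 (d : ℕ) (D D' : Matrix (Fin d) (Fin d) ℝ)
    (hD : ∀ j, ∑ i, (D i j) ^ 2 = 1) (hD' : ∀ j, ∑ i, (D' i j) ^ 2 = 1)
    (Λ : Matrix (Fin d) (Fin d) ℝ)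
    (hΛ : Λ = Matrix.diagonal (fun j => -(1 / 2) * ∑ i, (D i j - D' i j) ^ 2)) :
    frob (D' - D - D * Λ) ^ 2 = ∑ j, (1 - (∑ i, D i j * D' i j) ^ 2) ∧
    frob (D' - D - D * Λ) ≤ frob (D' - D) := by
  set c : Fin d → ℝ := fun j => ∑ i, D i j * D' i j with hc
  have hlam : ∀ j, -(1/2 : ℝ) * ∑ i, (D i j - D' i j) ^ 2 = c j - 1 := by
    intro j
    have h1 : ∑ i, (D i j - D' i j) ^ 2
        = ∑ i, ((D i j)^2 - 2 * (D i j * D' i j) + (D' i j)^2) := by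
      apply Finset.sum_congr rfl; intro i _; ring
    rw [h1, Finset.sum_add_distrib, Finset.sum_sub_distrib, hD, hD',
      ← Finset.mul_sum]
    ring
  have hE : ∀ i j, (D' - D - D * Λ) i j = D' i j - c j * D i j := by
    intro i j
    simp only [hΛ, Matrix.sub_apply, Matrix.mul_diagonal, hlam]
    ring
  have hsum1 : ∑ i, ∑ j, ((D' - D - D * Λ) i j) ^ 2
      = ∑ j, (1 - (c j) ^ 2) := by
    rw [Finset.sum_comm]
    apply Finset.sum_congr rfl
    intro j _
    have h1 : ∑ i, ((D' - D - D * Λ) i j) ^ 2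
        = ∑ i, ((D' i j)^2 - 2 * (c j) * (D i j * D' i j) + (c j)^2 * (D i j)^2) := by
      apply Finset.sum_congr rfl; intro i _; rw [hE]; ring
    rw [h1, Finset.sum_add_distrib, Finset.sum_sub_distrib, hD',
      ← Finset.mul_sum, ← Finset.mul_sum, hD]
    ring
  have hsum2 : ∑ i, ∑ j, ((D' - D) i j) ^ 2 = ∑ j, (2 - 2 * c j) := by
    rw [Finset.sum_comm]
    apply Finset.sum_congr rfl
    intro j _
    have h1 : ∑ i, ((D' - D) i j) ^ 2
        = ∑ i, ((D' i j)^2 - 2 * (D i j * D' i j) + (D i j)^2) := by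
      apply Finset.sum_congr rfl; intro i _; simp [Matrix.sub_apply]; ring
    rw [h1, Finset.sum_add_distrib, Finset.sum_sub_distrib, hD', hD,
      ← Finset.mul_sum]
    ring
  have h1 : frob (D' - D - D * Λ) ^ 2 = ∑ j, (1 - (c j) ^ 2) := by
    rw [frob, Real.sq_sqrt, hsum1]
    apply Finset.sum_nonneg; intro i _
    apply Finset.sum_nonneg; intro j _; positivity
  constructor
  · exact h1
  · rw [frob, frob]
    apply Real.sqrt_le_sqrt
    rw [hsum1, hsum2]
    apply Finset.sum_le_sum
    intro j _
    nlinarith [sq_nonneg (1 - c j)]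
end

section
/- Let D ∈ ℝ^{d×d} be an invertible matrix with unit-norm columns, fix a column index k, and let w ∈ ℝ^d with w_k = 1. Define M = DᵀD and the matrix Q whose k-th row is wᵀD⁻¹ and whose h-th row (h ≠ k) is √((w_h - M_{k,h})² + 1 - M_{k,h}²) times the h-th row of D⁻¹. If Q is invertible, then every column of Q⁻¹ has unit Euclidean norm. -/
open Matrix Finset

theorem stmt6 (d : ℕ) (D : Matrix (Fin d) (Fin d) ℝ)
    (hDinv : IsUnit D)
    (hD : ∀ j, ∑ i, (D i j) ^ 2 = 1)
    (k : Fin d) (w : Fin d → ℝ) (hw : w k = 1)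
    (M : Matrix (Fin d) (Fin d) ℝ) (hM : M = Dᵀ * D)
    (Q : Matrix (Fin d) (Fin d) ℝ)
    (hQ : Q = fun i j => if i = k then ∑ l, w l * D⁻¹ l j
      else Real.sqrt ((w i - M k i) ^ 2 + 1 - (M k i) ^ 2) * D⁻¹ i j)
    (hQinv : IsUnit Q) :
    ∀ j, ∑ i, (Q⁻¹ i j) ^ 2 = 1 := by
  have hDdet : IsUnit D.det := (Matrix.isUnit_iff_isUnit_det D).mp hDinv
  have hDD : D⁻¹ * D = 1 := Matrix.nonsing_inv_mul D hDdet
  have hQdet : Q.det ≠ 0 := ((Matrix.isUnit_iff_isUnit_det Q).mp hQinv).ne_zero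
  set c : Fin d → ℝ := fun i => Real.sqrt ((w i - M k i) ^ 2 + 1 - (M k i) ^ 2) with hc
  have hargpos : ∀ j, j ≠ k → 0 < (w j - M k j) ^ 2 + 1 - (M k j) ^ 2 := by
    intro j hj
    by_contra h
    push_neg at h
    have hs : Real.sqrt ((w j - M k j) ^ 2 + 1 - (M k j) ^ 2) = 0 :=
      Real.sqrt_eq_zero'.mpr h
    have : Q.det = 0 := by
      apply Matrix.det_eq_zero_of_row_eq_zero j
      intro l
      simp only [hQ, if_neg hj]
      rw [hs]; ring
    exact hQdet this
  have hcsq : ∀ j, j ≠ k → c j ^ 2 = (w j - M k j) ^ 2 + 1 - (M k j) ^ 2 := by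
    intro j hj
    rw [hc]
    exact Real.sq_sqrt (le_of_lt (hargpos j hj))
  have hcne : ∀ j, j ≠ k → c j ≠ 0 := by
    intro j hj h
    have h1 := hcsq j hj
    rw [h] at h1
    have h2 := hargpos j hj
    nlinarith
  set A : Matrix (Fin d) (Fin d) ℝ :=
    fun i j => if i = k then w j else if i = j then c i else 0 with hA
  set B : Matrix (Fin d) (Fin d) ℝ := fun i j =>
    if j = k then (if i = k then 1 else 0)
    else (if i = j then 1 / c j else if i = k then - w j / c j else 0) with hB
  -- generic sum against a column of B
  have hsum : ∀ (f : Fin d → ℝ) (j : Fin d), j ≠ k →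
      ∑ l, f l * B l j = f j * (1 / c j) + f k * (- w j / c j) := by
    intro f j hjk
    have expand : ∀ l, f l * B l j =
        (if l = j then f l * (1 / c j) else 0) + (if l = k then f l * (- w j / c j) else 0) := by
      intro l
      simp only [hB, if_neg hjk]
      by_cases h1 : l = j
      · subst h1
        simp [hjk]
      · by_cases h2 : l = k
        · subst h2
          simp [h1]
        · simp [h1, h2]
    rw [Finset.sum_congr rfl fun l _ => expand l, Finset.sum_add_distrib,
      Finset.sum_ite_eq', Finset.sum_ite_eq']
    simp
  have hsumk : ∀ (f : Fin d → ℝ), ∑ l, f l * B l k = f k := by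
    intro f
    have expand : ∀ l, f l * B l k = if l = k then f l else 0 := by
      intro l
      simp only [hB, if_pos rfl]
      by_cases h : l = k <;> simp [h]
    rw [Finset.sum_congr rfl fun l _ => expand l, Finset.sum_ite_eq']
    simp
  have hQA : Q = A * D⁻¹ := by
    ext i j
    simp only [Matrix.mul_apply]
    simp only [hQ, hA]
    by_cases hik : i = k
    · simp [hik]
    · simp only [hik, if_false]
      rw [Finset.sum_eq_single i]
      · simp [hc]
      · intro b _ hb
        simp [Ne.symm hb]
      · simp
  have hAB : A * B = 1 := by
    ext i j
    simp only [Matrix.mul_apply, Matrix.one_apply]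
    simp only [hA]
    by_cases hik : i = k
    · simp only [if_pos hik]
      by_cases hjk : j = k
      · rw [hjk, hsumk w, hw]
        simp [hik]
      · rw [hsum w j hjk, hw, if_neg (fun h => hjk (h.symm.trans hik))]
        field_simp
        simp
    · simp only [if_neg hik]
      have step : ∀ l, (if i = l then c i else 0) * B l j = if l = i then c i * B i j else 0 := by
        intro l
        by_cases h : l = i
        · subst h; simp
        · simp [Ne.symm h, h]
      rw [Finset.sum_congr rfl fun l _ => step l, Finset.sum_ite_eq']
      simp only [Finset.mem_univ, if_pos]
      by_cases hjk : j = k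
      · rw [hjk]
        simp only [hB, if_pos rfl, if_neg hik]
        ring
      · simp only [hB, if_neg hjk]
        by_cases hij : i = j
        · rw [if_pos hij, if_pos hij, hij, mul_one_div, div_self (hcne j hjk)]
        · rw [if_neg hij, if_neg hij, if_neg hik]
          ring
  have hQright : Q * (D * B) = 1 := by
    rw [hQA]
    calc A * D⁻¹ * (D * B) = A * (D⁻¹ * D) * B := by
          rw [Matrix.mul_assoc, Matrix.mul_assoc, Matrix.mul_assoc]
      _ = A * B := by rw [hDD, Matrix.mul_one]
      _ = 1 := hAB
  have hQinvEq : Q⁻¹ = D * B := Matrix.inv_eq_right_inv hQright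
  have hMS : ∀ j, M k j = ∑ i, D i k * D i j := by
    intro j
    rw [hM]
    simp [Matrix.mul_apply, Matrix.transpose_apply]
  intro j
  rw [hQinvEq]
  by_cases hjk : j = k
  · have hcol : ∀ i, (D * B) i j = D i j := by
      intro i
      rw [Matrix.mul_apply, hjk, hsumk (fun l => D i l), ← hjk]
    rw [Finset.sum_congr rfl fun i _ => by rw [hcol i]]
    exact hD j
  · have hcol : ∀ i, (D * B) i j = D i j * (1 / c j) + D i k * (- w j / c j) := by
      intro i
      rw [Matrix.mul_apply, hsum (fun l => D i l) j hjk]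
    rw [Finset.sum_congr rfl fun i _ => by rw [hcol i]]
    have expand2 : ∀ i, (D i j * (1 / c j) + D i k * (- w j / c j)) ^ 2 =
        (1 / c j) ^ 2 * (D i j) ^ 2 + (2 * (1 / c j) * (- w j / c j)) * (D i k * D i j)
          + (- w j / c j) ^ 2 * (D i k) ^ 2 := by
      intro i; ring
    rw [Finset.sum_congr rfl fun i _ => expand2 i, Finset.sum_add_distrib,
      Finset.sum_add_distrib, ← Finset.mul_sum, ← Finset.mul_sum, ← Finset.mul_sum,
      hD j, hD k, ← hMS j]
    have key : c j ^ 2 = w j ^ 2 - 2 * w j * M k j + 1 := by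
      have := hcsq j hjk
      nlinarith [this]
    have hcj := hcne j hjk
    field_simp
    linear_combination (-1) * key
end

section
/- For the sparse Gaussian coefficient model SG(s) in dimension K, for every matrix X ∈ ℝ^{K×K} with zero diagonal, the quantity √(2/π) · Σ_{k=1}^K C(K,s)⁻¹ Σ_{S ⊆ {1,…,K}, k∉S, |S|=s} √(Σ_{j∈S} X_{k,j}²) is at least (s(K-s)/(K(K-1)))·√(2/π)·‖X‖_F, provided the lemma that C(K-2,l-1)⁻¹ Σ_{|S|=l, S⊆{1,…,K-1}} √(Σ_{j∈S} z_j²) is nonincreasing in l holds. -/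
open Matrix Finset

lemma sqrt_add_le' {a b : ℝ} (ha : 0 ≤ a) (hb : 0 ≤ b) :
    Real.sqrt (a + b) ≤ Real.sqrt a + Real.sqrt b := by
  have h : a + b ≤ (Real.sqrt a + Real.sqrt b) ^ 2 := by
    rw [add_sq, Real.sq_sqrt ha, Real.sq_sqrt hb]
    nlinarith [Real.sqrt_nonneg a, Real.sqrt_nonneg b]
  calc Real.sqrt (a + b) ≤ Real.sqrt ((Real.sqrt a + Real.sqrt b) ^ 2) :=
        Real.sqrt_le_sqrt h
    _ = Real.sqrt a + Real.sqrt b := by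
        rw [Real.sqrt_sq (by positivity)]

lemma sqrt_sum_le_sum_sqrt {ι : Type*} (t : Finset ι) (f : ι → ℝ) (hf : ∀ i ∈ t, 0 ≤ f i) :
    Real.sqrt (∑ i ∈ t, f i) ≤ ∑ i ∈ t, Real.sqrt (f i) := by
  classical
  induction t using Finset.induction_on with
  | empty => simp
  | @insert a u hni ih =>
    rw [Finset.sum_insert hni, Finset.sum_insert hni]
    have h1 : 0 ≤ f a := hf a (Finset.mem_insert_self _ _)
    have h2 : 0 ≤ ∑ i ∈ u, f i :=
      Finset.sum_nonneg fun i hi => hf i (Finset.mem_insert_of_mem hi)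
    calc Real.sqrt (f a + ∑ i ∈ u, f i) ≤ Real.sqrt (f a) + Real.sqrt (∑ i ∈ u, f i) :=
          sqrt_add_le' h1 h2
      _ ≤ Real.sqrt (f a) + ∑ i ∈ u, Real.sqrt (f i) := by
          gcongr
          exact ih fun i hi => hf i (Finset.mem_insert_of_mem hi)

lemma choose_id (a b : ℕ) :
    a.choose b * ((a + 2) * (a + 1)) = (b + 1) * (a + 1 - b) * (a + 2).choose (b + 1) := by
  have h1 : (a + 2) * (a + 1).choose b = (a + 2).choose (b + 1) * (b + 1) :=
    Nat.add_one_mul_choose_eq (a + 1) b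
  have h2 : a.choose b * (a + 1) = (a + 1).choose b * (a + 1 - b) :=
    Nat.choose_mul_succ_eq a b
  calc a.choose b * ((a + 2) * (a + 1)) = (a.choose b * (a + 1)) * (a + 2) := by ring
    _ = (a + 1).choose b * (a + 1 - b) * (a + 2) := by rw [h2]
    _ = ((a + 2) * (a + 1).choose b) * (a + 1 - b) := by ring
    _ = ((a + 2).choose (b + 1) * (b + 1)) * (a + 1 - b) := by rw [h1]
    _ = (b + 1) * (a + 1 - b) * (a + 2).choose (b + 1) := by ring

theorem stmt7 (K s : ℕ) (hK : 2 ≤ K) (hs : 1 ≤ s) (hsK : s ≤ K - 1)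
    (X : Matrix (Fin K) (Fin K) ℝ) (hdiag : ∀ k, X k k = 0)
    -- Lemma 6.5 of Wu–Yu 2015 (combinatorial averaging lemma), assumed:
    (hlem : ∀ (k : Fin K) (z : Fin K → ℝ) (l m : ℕ), 1 ≤ l → l ≤ m → m ≤ K - 1 →
      ((K - 2).choose (l - 1) : ℝ)⁻¹ *
          ∑ S ∈ Finset.powersetCard l (Finset.univ.erase k),
            Real.sqrt (∑ j ∈ S, (z j) ^ 2) ≥
        ((K - 2).choose (m - 1) : ℝ)⁻¹ *
          ∑ S ∈ Finset.powersetCard m (Finset.univ.erase k),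
            Real.sqrt (∑ j ∈ S, (z j) ^ 2)) :
    Real.sqrt (2 / Real.pi) *
        ∑ k, (K.choose s : ℝ)⁻¹ *
          ∑ S ∈ Finset.powersetCard s (Finset.univ.erase k),
            Real.sqrt (∑ j ∈ S, (X k j) ^ 2) ≥
      ((s : ℝ) * (K - s) / (K * (K - 1))) * Real.sqrt (2 / Real.pi) * frob X := by
  have hcard : ∀ k : Fin K, (Finset.univ.erase k).card = K - 1 := by
    intro k
    rw [Finset.card_erase_of_mem (Finset.mem_univ k)]
    simp
  -- Step 1: per-row lower bound from hlem
  have hrow : ∀ k : Fin K,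
      ∑ S ∈ Finset.powersetCard s (Finset.univ.erase k),
        Real.sqrt (∑ j ∈ S, (X k j) ^ 2) ≥
      ((K - 2).choose (s - 1) : ℝ) * Real.sqrt (∑ j, (X k j) ^ 2) := by
    intro k
    have h := hlem k (X k) s (K - 1) hs (by omega) (le_refl _)
    have hself : Finset.powersetCard (K - 1) (Finset.univ.erase k) = {Finset.univ.erase k} := by
      rw [← hcard k, Finset.powersetCard_self]
    have hrowsum : ∑ j ∈ Finset.univ.erase k, (X k j) ^ 2 = ∑ j, (X k j) ^ 2 :=
      Finset.sum_erase _ (by simp [hdiag k])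
    have hch : (K - 2).choose (K - 1 - 1) = 1 := by
      have h2 : K - 1 - 1 = K - 2 := by omega
      rw [h2, Nat.choose_self]
    rw [hself] at h
    simp only [Finset.sum_singleton, hrowsum, hch, Nat.cast_one, inv_one, one_mul] at h
    have hpos : (0 : ℝ) < ((K - 2).choose (s - 1) : ℝ) := by
      exact_mod_cast Nat.choose_pos (show s - 1 ≤ K - 2 by omega)
    rw [ge_iff_le, inv_mul_eq_div, le_div_iff₀ hpos] at h
    rw [ge_iff_le, mul_comm]
    exact h
  -- Step 2: ratio of binomials
  have hKcpos : (0 : ℝ) < (K.choose s : ℝ) := by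
    exact_mod_cast Nat.choose_pos (show s ≤ K by omega)
  have hratio : ((K - 2).choose (s - 1) : ℝ) / (K.choose s : ℝ) =
      (s : ℝ) * ((K : ℝ) - s) / ((K : ℝ) * ((K : ℝ) - 1)) := by
    have hnat := choose_id (K - 2) (s - 1)
    have e1 : K - 2 + 2 = K := by omega
    have e2 : K - 2 + 1 = K - 1 := by omega
    have e3 : s - 1 + 1 = s := by omega
    have e4 : K - 1 - (s - 1) = K - s := by omega
    rw [e1, e2, e3, e4] at hnat
    -- hnat : (K-2).choose (s-1) * (K * (K-1)) = s * (K - s) * K.choose s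
    have hcast : ((K - 2).choose (s - 1) : ℝ) * ((K : ℝ) * ((K : ℝ) - 1)) =
        (s : ℝ) * ((K : ℝ) - (s : ℝ)) * (K.choose s : ℝ) := by
      have c1 : ((K - 1 : ℕ) : ℝ) = (K : ℝ) - 1 := by
        have : 1 ≤ K := by omega
        push_cast [this]; ring
      have c2 : ((K - s : ℕ) : ℝ) = (K : ℝ) - (s : ℝ) := by
        have : s ≤ K := by omega
        push_cast [this]; ring
      have := congrArg (Nat.cast : ℕ → ℝ) hnat
      push_cast at this
      rw [c1, c2] at this
      linarith [this]
    have hden : (K : ℝ) * ((K : ℝ) - 1) ≠ 0 := by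
      have h1 : (2 : ℝ) ≤ (K : ℝ) := by exact_mod_cast hK
      nlinarith
    rw [div_eq_div_iff hKcpos.ne' hden]
    linarith [hcast]
  -- Step 3: sum over rows
  have hsum : ∑ k, (K.choose s : ℝ)⁻¹ *
      ∑ S ∈ Finset.powersetCard s (Finset.univ.erase k),
        Real.sqrt (∑ j ∈ S, (X k j) ^ 2) ≥
      ((s : ℝ) * ((K : ℝ) - s) / ((K : ℝ) * ((K : ℝ) - 1))) *
        ∑ k, Real.sqrt (∑ j, (X k j) ^ 2) := by
    rw [Finset.mul_sum]
    apply Finset.sum_le_sum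
    intro k _
    calc (s : ℝ) * ((K : ℝ) - s) / ((K : ℝ) * ((K : ℝ) - 1)) *
          Real.sqrt (∑ j, (X k j) ^ 2)
        = ((K - 2).choose (s - 1) : ℝ) / (K.choose s : ℝ) *
          Real.sqrt (∑ j, (X k j) ^ 2) := by rw [hratio]
      _ = (K.choose s : ℝ)⁻¹ * (((K - 2).choose (s - 1) : ℝ) *
          Real.sqrt (∑ j, (X k j) ^ 2)) := by ring
      _ ≤ (K.choose s : ℝ)⁻¹ *
          ∑ S ∈ Finset.powersetCard s (Finset.univ.erase k),
            Real.sqrt (∑ j ∈ S, (X k j) ^ 2) :=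
          mul_le_mul_of_nonneg_left (hrow k) (by positivity)
  -- Step 4: sum of row norms ≥ frobenius norm
  have hfrob : frob X ≤ ∑ k, Real.sqrt (∑ j, (X k j) ^ 2) := by
    unfold frob
    exact sqrt_sum_le_sum_sqrt _ _ (fun i _ => Finset.sum_nonneg fun j _ => sq_nonneg _)
  have hcnn : (0 : ℝ) ≤ (s : ℝ) * ((K : ℝ) - s) / ((K : ℝ) * ((K : ℝ) - 1)) := by
    have h1 : (s : ℝ) ≤ (K : ℝ) := by exact_mod_cast (show s ≤ K by omega)
    have h2 : (1 : ℝ) ≤ (K : ℝ) := by exact_mod_cast (show 1 ≤ K by omega)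
    have h0 : (0 : ℝ) ≤ (s : ℝ) := Nat.cast_nonneg s
    apply div_nonneg
    · nlinarith
    · nlinarith
  have hsqrt : (0 : ℝ) ≤ Real.sqrt (2 / Real.pi) := Real.sqrt_nonneg _
  calc ((s : ℝ) * ((K : ℝ) - s) / ((K : ℝ) * ((K : ℝ) - 1))) * Real.sqrt (2 / Real.pi) * frob X
      ≤ ((s : ℝ) * ((K : ℝ) - s) / ((K : ℝ) * ((K : ℝ) - 1))) * Real.sqrt (2 / Real.pi) *
        ∑ k, Real.sqrt (∑ j, (X k j) ^ 2) := by
        apply mul_le_mul_of_nonneg_left hfrob (by positivity)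
    _ = Real.sqrt (2 / Real.pi) * (((s : ℝ) * ((K : ℝ) - s) / ((K : ℝ) * ((K : ℝ) - 1))) *
        ∑ k, Real.sqrt (∑ j, (X k j) ^ 2)) := by ring
    _ ≤ Real.sqrt (2 / Real.pi) *
        ∑ k, (K.choose s : ℝ)⁻¹ *
          ∑ S ∈ Finset.powersetCard s (Finset.univ.erase k),
            Real.sqrt (∑ j ∈ S, (X k j) ^ 2) :=
        mul_le_mul_of_nonneg_left hsum hsqrt
end

section
/- Let K ≥ 2 and 1 ≤ s ≤ K-1 be integers and c > 0. The minimum of Σ_{k=1}^K (s/K)·C(K-1,s-1)⁻¹ Σ_{S⊆{1,…,K}, k∉S, |S|=s} √(Σ_{j∈S} A_{k,j}²) over matrices A ∈ ℝ^{K×K} with zero diagonal subject to Σ_k Σ_{j≠k} A_{k,j} = K(K-1) equals (K-s)√s, attained at the matrix with all off-diagonal entries equal to 1. -/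
open Matrix Finset

/-- The objective functional in the symmetric minimization problem. -/
noncomputable def obj9 (K s : ℕ) (A : Matrix (Fin K) (Fin K) ℝ) : ℝ :=
  ∑ k, ((s : ℝ) / K) * ((K - 1).choose (s - 1) : ℝ)⁻¹ *
    ∑ S ∈ Finset.powersetCard s (Finset.univ.erase k),
      Real.sqrt (∑ j ∈ S, (A k j) ^ 2)

-- counting lemma
lemma count_mem_powersetCard {α : Type*} [DecidableEq α] (u : Finset α) (s : ℕ) (hs : 1 ≤ s)
    (j : α) (hj : j ∈ u) :
    ((powersetCard s u).filter (fun S => j ∈ S)).card = (u.card - 1).choose (s - 1) := by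
  rw [← Finset.card_erase_of_mem hj, ← Finset.card_powersetCard]
  apply Finset.card_bij (fun S _ => S.erase j)
  · intro S hS
    simp only [mem_filter, mem_powersetCard] at hS
    rw [mem_powersetCard]
    refine ⟨Finset.erase_subset_erase _ hS.1.1, ?_⟩
    rw [Finset.card_erase_of_mem hS.2, hS.1.2]
  · intro S hS T hT h
    simp only [mem_filter] at hS hT
    rw [← Finset.insert_erase hS.2, ← Finset.insert_erase hT.2, h]
  · intro T hT
    rw [mem_powersetCard] at hT
    have hjT : j ∉ T := fun h => (Finset.mem_erase.mp (hT.1 h)).1 rfl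
    refine ⟨insert j T, ?_, ?_⟩
    · simp only [mem_filter, mem_powersetCard]
      refine ⟨⟨?_, ?_⟩, Finset.mem_insert_self _ _⟩
      · intro x hx
        rcases Finset.mem_insert.mp hx with rfl | hx
        · exact hj
        · exact Finset.mem_of_mem_erase (hT.1 hx)
      · rw [Finset.card_insert_of_notMem hjT, hT.2]; omega
    · rw [Finset.erase_insert hjT]

lemma sum_powersetCard_sum {α : Type*} [DecidableEq α] (u : Finset α) (s : ℕ) (hs : 1 ≤ s)
    (f : α → ℝ) :
    ∑ S ∈ powersetCard s u, ∑ j ∈ S, f j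
      = ((u.card - 1).choose (s - 1) : ℝ) * ∑ j ∈ u, f j := by
  have : ∀ S ∈ powersetCard s u, ∑ j ∈ S, f j = ∑ j ∈ u, if j ∈ S then f j else 0 := by
    intro S hS
    rw [Finset.sum_ite_mem, Finset.inter_eq_right.mpr (Finset.mem_powersetCard.mp hS).1]
  rw [Finset.sum_congr rfl this, Finset.sum_comm]
  rw [Finset.mul_sum]
  refine Finset.sum_congr rfl fun j hj => ?_
  rw [← Finset.sum_filter, Finset.sum_const, count_mem_powersetCard u s hs j hj]
  simp [mul_comm]

theorem stmt9 (K s : ℕ) (hK : 2 ≤ K) (hs : 1 ≤ s) (hsK : s ≤ K - 1) :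
    IsLeast {x : ℝ | ∃ A : Matrix (Fin K) (Fin K) ℝ,
        (∀ k, A k k = 0) ∧
        (∑ k, ∑ j ∈ Finset.univ.erase k, A k j) = (K : ℝ) * (K - 1) ∧
        x = obj9 K s A}
      (((K : ℝ) - s) * Real.sqrt s) ∧
    obj9 K s (fun k j => if k = j then 0 else 1) = ((K : ℝ) - s) * Real.sqrt s := by
  have hKpos : (0:ℝ) < K := by positivity
  have hn1 : 0 < (K - 1).choose (s - 1) := Nat.choose_pos (by omega)
  have hn1R : (0:ℝ) < ((K - 1).choose (s - 1) : ℝ) := by exact_mod_cast hn1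
  have hsR : (0:ℝ) < s := by exact_mod_cast hs
  have hsqrt : (0:ℝ) < Real.sqrt s := Real.sqrt_pos.mpr hsR
  have hcardE : ∀ k : Fin K, (Finset.univ.erase k).card = K - 1 := fun k => by
    rw [Finset.card_erase_of_mem (mem_univ k), Finset.card_univ, Fintype.card_fin]
  -- nat identity: s * C(K-1,s) = (K-s) * C(K-1,s-1)
  have hnat : (K - 1).choose s * s = (K - 1).choose (s - 1) * (K - s) := by
    have := Nat.choose_succ_right_eq (K - 1) (s - 1)
    have h1 : s - 1 + 1 = s := by omega
    have h2 : K - 1 - (s - 1) = K - s := by omega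
    rw [h1, h2] at this
    exact this
  have hid : ((K - 1).choose s : ℝ) * s = ((K:ℝ) - s) * ((K - 1).choose (s - 1) : ℝ) := by
    have : (((K - 1).choose s * s : ℕ) : ℝ) = (((K - 1).choose (s - 1) * (K - s) : ℕ) : ℝ) := by
      norm_cast
    push_cast [Nat.cast_sub (by omega : s ≤ K)] at this
    linarith [this]
  -- equality part
  have heq : obj9 K s (fun k j => if k = j then 0 else 1) = ((K : ℝ) - s) * Real.sqrt s := by
    unfold obj9
    have hk : ∀ k : Fin K,
        ∑ S ∈ powersetCard s (Finset.univ.erase k),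
          Real.sqrt (∑ j ∈ S, ((if k = j then (0:ℝ) else 1)) ^ 2)
        = ((K - 1).choose s : ℝ) * Real.sqrt s := by
      intro k
      have : ∀ S ∈ powersetCard s (Finset.univ.erase k),
          Real.sqrt (∑ j ∈ S, ((if k = j then (0:ℝ) else 1)) ^ 2) = Real.sqrt s := by
        intro S hS
        rw [mem_powersetCard] at hS
        have hval : ∀ j ∈ S, ((if k = j then (0:ℝ) else 1)) ^ 2 = 1 := by
          intro j hj
          have hjk : j ≠ k := (Finset.mem_erase.mp (hS.1 hj)).1
          rw [if_neg (Ne.symm hjk)]; norm_num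
        have : ∑ j ∈ S, ((if k = j then (0:ℝ) else 1)) ^ 2 = (s:ℝ) := by
          rw [Finset.sum_congr rfl hval, Finset.sum_const, hS.2, nsmul_eq_mul, mul_one]
        rw [this]
      rw [Finset.sum_congr rfl this, Finset.sum_const, Finset.card_powersetCard, hcardE,
        nsmul_eq_mul]
    rw [Finset.sum_congr rfl (fun k _ => by rw [hk k]), Finset.sum_const, Finset.card_univ,
      Fintype.card_fin, nsmul_eq_mul]
    field_simp
    linear_combination hid
  refine ⟨⟨⟨fun k j => if k = j then 0 else 1, fun k => if_pos rfl, ?_, heq.symm⟩, ?_⟩, heq⟩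
  · -- constraint at the ones matrix
    have : ∀ k : Fin K, ∑ j ∈ Finset.univ.erase k, (if k = j then (0:ℝ) else 1) = (K:ℝ) - 1 := by
      intro k
      rw [Finset.sum_congr rfl (fun j hj => if_neg (Ne.symm (Finset.mem_erase.mp hj).1)),
        Finset.sum_const, hcardE, nsmul_eq_mul, mul_one]
      push_cast [Nat.cast_sub (by omega : 1 ≤ K)]
      ring
    rw [Finset.sum_congr rfl (fun k _ => this k), Finset.sum_const, Finset.card_univ,
      Fintype.card_fin, nsmul_eq_mul]
  · -- lower bound
    rintro x ⟨A, hdiag, hsum, rfl⟩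
    unfold obj9
    -- per-k bound
    have key : ∀ k : Fin K,
        ((K - 2).choose (s - 1) : ℝ) * ∑ j ∈ Finset.univ.erase k, A k j
          ≤ Real.sqrt s * ∑ S ∈ powersetCard s (Finset.univ.erase k),
              Real.sqrt (∑ j ∈ S, (A k j) ^ 2) := by
      intro k
      have hstep : ∀ S ∈ powersetCard s (Finset.univ.erase k),
          ∑ j ∈ S, A k j ≤ Real.sqrt s * Real.sqrt (∑ j ∈ S, (A k j) ^ 2) := by
        intro S hS
        rw [mem_powersetCard] at hS
        have hcs : (∑ j ∈ S, A k j) ^ 2 ≤ (s:ℝ) * ∑ j ∈ S, (A k j) ^ 2 := by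
          have := sq_sum_le_card_mul_sum_sq (s := S) (f := fun j => A k j)
          rwa [hS.2] at this
        calc ∑ j ∈ S, A k j ≤ |∑ j ∈ S, A k j| := le_abs_self _
          _ = Real.sqrt ((∑ j ∈ S, A k j) ^ 2) := (Real.sqrt_sq_eq_abs _).symm
          _ ≤ Real.sqrt ((s:ℝ) * ∑ j ∈ S, (A k j) ^ 2) := Real.sqrt_le_sqrt hcs
          _ = Real.sqrt s * Real.sqrt (∑ j ∈ S, (A k j) ^ 2) := Real.sqrt_mul hsR.le _
      calc ((K - 2).choose (s - 1) : ℝ) * ∑ j ∈ Finset.univ.erase k, A k j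
          = ∑ S ∈ powersetCard s (Finset.univ.erase k), ∑ j ∈ S, A k j := by
            have e : K - 1 - 1 = K - 2 := by omega
            rw [sum_powersetCard_sum _ s hs, hcardE, e]
        _ ≤ ∑ S ∈ powersetCard s (Finset.univ.erase k),
              Real.sqrt s * Real.sqrt (∑ j ∈ S, (A k j) ^ 2) := Finset.sum_le_sum hstep
        _ = Real.sqrt s * ∑ S ∈ powersetCard s (Finset.univ.erase k),
              Real.sqrt (∑ j ∈ S, (A k j) ^ 2) := (Finset.mul_sum _ _ _).symm
    -- combine
    have hc : (0:ℝ) ≤ (s:ℝ) / K * ((K - 1).choose (s - 1) : ℝ)⁻¹ := by positivity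
    have hlow : ∀ k : Fin K,
        (s:ℝ) / K * ((K - 1).choose (s - 1) : ℝ)⁻¹ *
          (((K - 2).choose (s - 1) : ℝ) / Real.sqrt s * ∑ j ∈ Finset.univ.erase k, A k j)
        ≤ (s:ℝ) / K * ((K - 1).choose (s - 1) : ℝ)⁻¹ *
          ∑ S ∈ powersetCard s (Finset.univ.erase k),
            Real.sqrt (∑ j ∈ S, (A k j) ^ 2) := by
      intro k
      apply mul_le_mul_of_nonneg_left _ hc
      rw [div_mul_eq_mul_div, div_le_iff₀ hsqrt]
      linarith [key k]
    have := Finset.sum_le_sum (fun k (_ : k ∈ Finset.univ) => hlow k)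
    refine le_trans (le_of_eq ?_) this
    rw [← Finset.mul_sum, ← Finset.mul_sum, hsum]
    -- arithmetic identity
    have hC2 : ((K:ℝ) - 1) * ((K - 2).choose (s - 1) : ℝ)
        = ((K:ℝ) - s) * ((K - 1).choose (s - 1) : ℝ) := by
      have hn : (K - 1) * (K - 2).choose (s - 1) = (K - s) * (K - 1).choose (s - 1) := by
        have h1 := Nat.add_one_mul_choose_eq (K - 2) (s - 1)
        have e1 : K - 2 + 1 = K - 1 := by omega
        have e2 : s - 1 + 1 = s := by omega
        rw [e1, e2] at h1
        calc (K - 1) * (K - 2).choose (s - 1) = (K - 1).choose s * s := h1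
          _ = (K - 1).choose (s - 1) * (K - s) := hnat
          _ = (K - s) * (K - 1).choose (s - 1) := mul_comm _ _
      have := congrArg (fun n : ℕ => (n:ℝ)) hn
      push_cast [Nat.cast_sub (by omega : 1 ≤ K), Nat.cast_sub (by omega : s ≤ K)] at this
      linarith [this]
    have hsq : Real.sqrt s * Real.sqrt s = (s:ℝ) := Real.mul_self_sqrt hsR.le
    field_simp
    linear_combination ((K:ℝ) - (s:ℝ)) * (((K - 1).choose (s - 1) : ℕ) : ℝ) * hsq - (s:ℝ) * hC2
end

section
/- Consider the family of indicator functions F = { f_c : ℝ^K → {0,1} | c ∈ ℝ^K } where f_c(α) = 1 if Σ_j c_j α_j = 0 and Σ_j (c_j α_j)² > 0, and f_c(α) = 0 otherwise. Then F cannot shatter any set of 2K points in ℝ^K; that is, the VC dimension of F is at most 2K. -/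
open Finset

/-- The indicator classifier f_c from the family F. -/
def fc {K : ℕ} (c α : Fin K → ℝ) : Prop :=
  (∑ j, c j * α j = 0) ∧ 0 < ∑ j, (c j * α j) ^ 2

/-- The linear functional x ↦ ∑ j, c j * x j. -/
noncomputable def ell {K : ℕ} (c : Fin K → ℝ) : (Fin K → ℝ) →ₗ[ℝ] ℝ :=
  ∑ j, c j • LinearMap.proj j

lemma ell_apply {K : ℕ} (c x : Fin K → ℝ) : ell c x = ∑ j, c j * x j := by
  simp [ell, smul_eq_mul]

lemma sumsq_pos_iff {K : ℕ} (f : Fin K → ℝ) :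
    0 < ∑ j, (f j) ^ 2 ↔ ∃ j, f j ≠ 0 := by
  constructor
  · intro h
    by_contra hc
    push_neg at hc
    simp [hc] at h
  · rintro ⟨j, hj⟩
    exact Finset.sum_pos' (fun i _ => sq_nonneg _)
      ⟨j, Finset.mem_univ j, by positivity⟩

theorem stmt13 (K : ℕ) (hK : 1 ≤ K) (α : Fin (2 * K) → (Fin K → ℝ)) :
    ¬ (∀ b : Fin (2 * K) → Bool, ∃ c : Fin K → ℝ,
        ∀ i, fc c (α i) ↔ b i = true) := by
  classical
  intro h
  -- Step 1: label all points with 1.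
  obtain ⟨c₀, hc₀⟩ := h (fun _ => true)
  have hA : ∀ i, ∑ j, c₀ j * α i j = 0 := fun i => ((hc₀ i).mpr rfl).1
  have hB : ∀ i, ∃ j, c₀ j * α i j ≠ 0 := fun i =>
    (sumsq_pos_iff _).mp ((hc₀ i).mpr rfl).2
  -- the kernel of ell c₀ is a proper subspace
  set W := LinearMap.ker (ell c₀) with hW
  have hc₀ne : ∃ j, c₀ j ≠ 0 := by
    obtain ⟨j, hj⟩ := hB ⟨0, by omega⟩
    exact ⟨j, fun hc => hj (by simp [hc])⟩
  have hWlt : W < ⊤ := by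
    rw [lt_top_iff_ne_top]
    intro htop
    obtain ⟨j, hj⟩ := hc₀ne
    have hmem : (Pi.single j 1 : Fin K → ℝ) ∈ W := htop ▸ Submodule.mem_top
    rw [hW, LinearMap.mem_ker, ell_apply] at hmem
    apply hj
    rwa [Finset.sum_eq_single j (fun b _ hb => by simp [Pi.single_apply, hb])
      (fun hb => (hb (Finset.mem_univ j)).elim), Pi.single_eq_same, mul_one] at hmem
  have hWrank : Module.finrank ℝ W < K := by
    have := Submodule.finrank_lt (K := ℝ) (V := Fin K → ℝ) hWlt.ne
    rwa [Module.finrank_fintype_fun_eq_card, Fintype.card_fin] at this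
  -- Step 2: extract an independent spanning subfamily
  obtain ⟨b, hb_sub, hb_span, hb_ind⟩ := exists_linearIndependent ℝ (Set.range α)
  have hb_fin : b.Finite := hb_ind.setFinite
  haveI : Fintype b := hb_fin.fintype
  have hbW : Submodule.span ℝ b ≤ W := by
    rw [hb_span, Submodule.span_le]
    rintro v ⟨i, rfl⟩
    rw [SetLike.mem_coe, hW, LinearMap.mem_ker, ell_apply]
    exact hA i
  have hcard_b : b.toFinset.card < K := by
    rw [← finrank_span_set_eq_card hb_ind]
    exact lt_of_le_of_lt (Submodule.finrank_mono hbW) hWrank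
  -- indices of the spanning vectors
  have hidx : ∀ v : Fin K → ℝ, ∃ i, v ∈ b → α i = v := by
    intro v
    by_cases hv : v ∈ b
    · obtain ⟨i, hi⟩ := hb_sub hv
      exact ⟨i, fun _ => hi⟩
    · exact ⟨⟨0, by omega⟩, fun hv' => absurd hv' hv⟩
  choose idx hidx using hidx
  set S : Finset (Fin (2 * K)) := b.toFinset.image idx with hS
  have hS_card : S.card < K := lt_of_le_of_lt (Finset.card_image_le) hcard_b
  have hmem_span : ∀ i, α i ∈ Submodule.span ℝ (α '' ↑S) := by
    intro i
    have h1 : α i ∈ Submodule.span ℝ (Set.range α) :=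
      Submodule.subset_span ⟨i, rfl⟩
    rw [← hb_span] at h1
    refine Submodule.span_mono ?_ h1
    intro v hv
    exact ⟨idx v, by
      simp only [hS, Finset.coe_image, Set.mem_image, Finset.mem_coe, Set.mem_toFinset]
      exact ⟨v, hv, rfl⟩, hidx v hv⟩
  -- Step 3: the complement T has at least K+1 elements
  set T : Finset (Fin (2 * K)) := Sᶜ with hT
  have hT_card : K + 1 ≤ T.card := by
    have : T.card = 2 * K - S.card := by
      rw [hT, Finset.card_compl, Fintype.card_fin]
    omega
  -- Step 4: pigeonhole on supports
  have hpigeon : ∃ i₀ ∈ T, ∀ j, α i₀ j ≠ 0 →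
      ∃ i' ∈ T, i' ≠ i₀ ∧ α i' j ≠ 0 := by
    by_contra hcon
    push_neg at hcon
    have hcon' : ∀ i : Fin (2 * K), ∃ j, i ∈ T →
        (α i j ≠ 0 ∧ ∀ i' ∈ T, i' ≠ i → α i' j = 0) := by
      intro i
      by_cases hi : i ∈ T
      · obtain ⟨j, hj1, hj2⟩ := hcon i hi
        exact ⟨j, fun _ => ⟨hj1, fun i' hi' hne => hj2 i' hi' hne⟩⟩
      · exact ⟨⟨0, by omega⟩, fun hi' => absurd hi' hi⟩
    choose g hg using hcon'
    have hinj : Set.InjOn g ↑T := by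
      intro i hi i' hi' hgi
      by_contra hne
      have h1 := (hg i hi).1
      have h2 := (hg i' hi').2 i hi hne
      rw [hgi] at h1
      exact h1 h2
    have := Finset.card_le_card_of_injOn g (fun _ _ => Finset.mem_univ _) hinj
    rw [Finset.card_univ, Fintype.card_fin] at this
    omega
  obtain ⟨i₀, hi₀T, hi₀⟩ := hpigeon
  -- Step 5: the impossible labeling
  obtain ⟨c, hc⟩ := h (fun i => decide (i ∈ S ∨ i = i₀))
  have hidc : ∀ i, fc c (α i) ↔ (i ∈ S ∨ i = i₀) := by
    intro i; rw [hc i]; simp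
  have hall : ∀ i, ∑ j, c j * α i j = 0 := by
    intro i
    have hker : α i ∈ LinearMap.ker (ell c) := by
      refine Submodule.span_le.mpr ?_ (hmem_span i)
      rintro v ⟨s, hs, rfl⟩
      rw [SetLike.mem_coe, LinearMap.mem_ker, ell_apply]
      exact ((hidc s).mpr (Or.inl hs)).1
    rw [LinearMap.mem_ker, ell_apply] at hker
    exact hker
  have hfc₀ : fc c (α i₀) := (hidc i₀).mpr (Or.inr rfl)
  obtain ⟨j, hj⟩ := (sumsq_pos_iff _).mp hfc₀.2
  have hcj : c j ≠ 0 := fun hc' => hj (by simp [hc'])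
  have hαj : α i₀ j ≠ 0 := fun hα' => hj (by simp [hα'])
  obtain ⟨i', hi'T, hi'ne, hi'j⟩ := hi₀ j hαj
  have hfc' : fc c (α i') :=
    ⟨hall i', (sumsq_pos_iff _).mpr ⟨j, mul_ne_zero hcj hi'j⟩⟩
  have := (hidc i').mp hfc'
  rcases this with hs | he
  · exact (Finset.mem_compl.mp hi'T) hs
  · exact hi'ne he
end
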